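/- Let φ : M → N be a map of finite free modules over a commutative ring R, representing a two-term complex computing cohomology of a flat family after base change. Let Q = coker(φ^∨ : N^∨ → M^∨). Then for every R-algebra A there is a natural bijection, functorial in A, between Hom_A(Q ⊗_R A, A) and ker(φ ⊗_R A : M ⊗_R A → N ⊗_R A), equivariant under scalar multiplication by A^×. -/

import Mathlib

open TensorProduct

/-- The evaluation pairing: a functional `ξ : M → R` induces, for any `R`-algebra `A`,
a map `M ⊗_R A → A` (written with the algebra factor on the left),
`a ⊗ m ↦ a • algebraMap R A (ξ m)`. -/
noncomputable def evalPairing (R A M : Type) [CommRing R] [CommRing A] [Algebra R A]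
    [AddCommGroup M] [Module R M] (ξ : Module.Dual R M) : (A ⊗[R] M) →ₗ[R] A :=
  TensorProduct.lift ((LinearMap.mul R A).compl₂ ((Algebra.linearMap R A) ∘ₗ ξ))

section Aux

variable {R A : Type} [CommRing R] [CommRing A] [Algebra R A]

lemma evalPairing_tmul {M : Type} [AddCommGroup M] [Module R M]
    (ξ : Module.Dual R M) (a : A) (m : M) :
    evalPairing R A M ξ (a ⊗ₜ[R] m) = a * algebraMap R A (ξ m) := rfl

lemma evalPairing_add_left {M : Type} [AddCommGroup M] [Module R M]
    (ξ₁ ξ₂ : Module.Dual R M) (x : A ⊗[R] M) :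
    evalPairing R A M (ξ₁ + ξ₂) x = evalPairing R A M ξ₁ x + evalPairing R A M ξ₂ x := by
  induction x using TensorProduct.induction_on with
  | zero => simp
  | tmul a m => simp [evalPairing_tmul, mul_add]
  | add x y hx hy => simp only [map_add, hx, hy]; abel

lemma evalPairing_smul_left {M : Type} [AddCommGroup M] [Module R M]
    (r : R) (ξ : Module.Dual R M) (x : A ⊗[R] M) :
    evalPairing R A M (r • ξ) x = r • evalPairing R A M ξ x := by
  induction x using TensorProduct.induction_on with
  | zero => simp
  | tmul a m =>
      simp [evalPairing_tmul, Algebra.smul_def, map_mul]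
      ring
  | add x y hx hy => simp only [map_add, hx, hy, smul_add]

/-- bundled version, linear in `ξ`. -/
noncomputable def evalAt {M : Type} [AddCommGroup M] [Module R M] (x : A ⊗[R] M) :
    Module.Dual R M →ₗ[R] A where
  toFun ξ := evalPairing R A M ξ x
  map_add' ξ₁ ξ₂ := evalPairing_add_left ξ₁ ξ₂ x
  map_smul' r ξ := evalPairing_smul_left r ξ x

@[simp] lemma evalAt_apply {M : Type} [AddCommGroup M] [Module R M] (x : A ⊗[R] M)
    (ξ : Module.Dual R M) : evalAt x ξ = evalPairing R A M ξ x := rfl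

lemma evalPairing_baseChange {M N : Type} [AddCommGroup M] [Module R M]
    [AddCommGroup N] [Module R N] (φ : M →ₗ[R] N) (η : Module.Dual R N)
    (x : A ⊗[R] M) :
    evalPairing R A N η (LinearMap.baseChange A φ x)
      = evalPairing R A M (φ.dualMap η) x := by
  induction x using TensorProduct.induction_on with
  | zero => simp
  | tmul a m => simp [evalPairing_tmul]
  | add x y hx hy => simp only [map_add, hx, hy]

variable {M : Type} [AddCommGroup M] [Module R M] [Module.Free R M] [Module.Finite R M]

lemma expansion (x : A ⊗[R] M) :
    ∑ i, evalPairing R A M ((Module.Free.chooseBasis R M).coord i) x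
        ⊗ₜ[R] (Module.Free.chooseBasis R M) i = x := by
  set b := Module.Free.chooseBasis R M with hb
  induction x using TensorProduct.induction_on with
  | zero => simp
  | tmul a m =>
      simp only [evalPairing_tmul]
      have h : ∀ i, (a * algebraMap R A (b.coord i m)) ⊗ₜ[R] b i
          = a ⊗ₜ[R] (b.repr m i • b i) := by
        intro i
        rw [Module.Basis.coord_apply, mul_comm, ← Algebra.smul_def, smul_tmul]
      simp_rw [h, ← TensorProduct.tmul_sum, Module.Basis.sum_repr]
  | add x y hx hy =>
      simp only [map_add, add_tmul, Finset.sum_add_distrib, hx, hy]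

lemma dual_expansion (ξ : Module.Dual R M) :
    ∑ i, ξ ((Module.Free.chooseBasis R M) i) • (Module.Free.chooseBasis R M).coord i = ξ := by
  set b := Module.Free.chooseBasis R M with hb
  ext m
  simp only [LinearMap.coe_sum, Finset.sum_apply, LinearMap.smul_apply,
    Module.Basis.coord_apply, smul_eq_mul]
  conv_rhs => rw [← Module.Basis.sum_repr b m]
  rw [map_sum]
  simp [mul_comm]

lemma evalPairing_sigma (f : Module.Dual R M →ₗ[R] A) (ξ : Module.Dual R M) :
    evalPairing R A M ξ
      (∑ i, f ((Module.Free.chooseBasis R M).coord i) ⊗ₜ[R] (Module.Free.chooseBasis R M) i)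
      = f ξ := by
  set b := Module.Free.chooseBasis R M with hb
  rw [map_sum]
  simp only [evalPairing_tmul]
  have h : ∀ i, f (b.coord i) * algebraMap R A (ξ (b i)) = f (ξ (b i) • b.coord i) := by
    intro i
    rw [map_smul, Algebra.smul_def, mul_comm]
  simp_rw [h, ← map_sum, hb, dual_expansion]

lemma eval_eq_zero {x : A ⊗[R] M} (h : ∀ ξ, evalPairing R A M ξ x = 0) : x = 0 := by
  rw [← expansion x]
  simp [h]

lemma alg_hom_ext' {Q : Type} [AddCommGroup Q] [Module R Q]
    {ψ₁ ψ₂ : (A ⊗[R] Q) →ₗ[A] A} (h : ∀ q, ψ₁ ((1:A) ⊗ₜ[R] q) = ψ₂ ((1:A) ⊗ₜ[R] q)) :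
    ψ₁ = ψ₂ := by
  apply LinearMap.ext; intro x
  induction x using TensorProduct.induction_on with
  | zero => simp
  | tmul a q =>
      have : a ⊗ₜ[R] q = a • ((1:A) ⊗ₜ[R] q) := by
        rw [smul_tmul', smul_eq_mul, mul_one]
      rw [this, map_smul, map_smul, h]
  | add x y hx hy => simp only [map_add, hx, hy]

end Aux

set_option linter.unusedSectionVars false

section Main

variable {R M N : Type} [CommRing R]
    [AddCommGroup M] [Module R M] [Module.Free R M] [Module.Finite R M]
    [AddCommGroup N] [Module R N] [Module.Free R N] [Module.Finite R N]
    (φ : M →ₗ[R] N)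
    (A : Type) [CommRing A] [Algebra R A]

noncomputable def fwdAux
    (ψ : (A ⊗[R] (Module.Dual R M ⧸ LinearMap.range φ.dualMap)) →ₗ[A] A) :
    Module.Dual R M →ₗ[R] A :=
  (ψ.restrictScalars R) ∘ₗ (TensorProduct.mk R A _ 1) ∘ₗ (LinearMap.range φ.dualMap).mkQ

lemma fwdAux_apply (ψ) (ξ : Module.Dual R M) :
    fwdAux φ A ψ ξ = ψ ((1:A) ⊗ₜ[R] Submodule.Quotient.mk ξ) := rfl

noncomputable def fwdElem (ψ : (A ⊗[R] (Module.Dual R M ⧸ LinearMap.range φ.dualMap)) →ₗ[A] A) : A ⊗[R] M :=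
  ∑ i, fwdAux φ A ψ ((Module.Free.chooseBasis R M).coord i)
      ⊗ₜ[R] (Module.Free.chooseBasis R M) i

lemma evalPairing_fwdElem (ψ) (ξ : Module.Dual R M) :
    evalPairing R A M ξ (fwdElem φ A ψ) = ψ ((1:A) ⊗ₜ[R] Submodule.Quotient.mk ξ) :=
  evalPairing_sigma _ _

lemma fwdElem_mem (ψ) : fwdElem φ A ψ ∈ LinearMap.ker (LinearMap.baseChange A φ) := by
  rw [LinearMap.mem_ker]
  apply eval_eq_zero
  intro η
  rw [evalPairing_baseChange, evalPairing_fwdElem]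
  have h : (Submodule.Quotient.mk (φ.dualMap η) :
      Module.Dual R M ⧸ LinearMap.range φ.dualMap) = 0 := by
    rw [Submodule.Quotient.mk_eq_zero]
    exact ⟨η, rfl⟩
  rw [h, TensorProduct.tmul_zero, map_zero]

noncomputable def bwd (x : LinearMap.ker (LinearMap.baseChange A φ)) :
    (A ⊗[R] (Module.Dual R M ⧸ LinearMap.range φ.dualMap)) →ₗ[A] A :=
  LinearMap.liftBaseChange A
    (Submodule.liftQ _ (evalAt (x : A ⊗[R] M)) (by
      rintro ξ ⟨η, rfl⟩
      simp only [LinearMap.mem_ker, evalAt_apply]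
      rw [← evalPairing_baseChange]
      have hx : LinearMap.baseChange A φ (x : A ⊗[R] M) = 0 := x.2
      rw [hx, map_zero]))

lemma bwd_apply (x) (ξ : Module.Dual R M) :
    bwd φ A x ((1:A) ⊗ₜ[R] Submodule.Quotient.mk ξ)
      = evalPairing R A M ξ (x : A ⊗[R] M) := by
  rw [bwd, LinearMap.liftBaseChange_tmul, one_smul, Submodule.liftQ_apply, evalAt_apply]

noncomputable def eAux :
    ((A ⊗[R] (Module.Dual R M ⧸ LinearMap.range φ.dualMap)) →ₗ[A] A) ≃
      LinearMap.ker (LinearMap.baseChange A φ) where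
  toFun ψ := ⟨fwdElem φ A ψ, fwdElem_mem φ A ψ⟩
  invFun := bwd φ A
  left_inv ψ := by
    apply alg_hom_ext'
    intro q
    obtain ⟨ξ, rfl⟩ := Submodule.Quotient.mk_surjective _ q
    rw [bwd_apply]
    exact evalPairing_fwdElem φ A ψ ξ
  right_inv x := by
    apply Subtype.ext
    show fwdElem φ A (bwd φ A x) = (x : A ⊗[R] M)
    rw [fwdElem]
    simp_rw [fwdAux_apply, bwd_apply]
    exact expansion _

end Main

/-- (Key linear-algebra step behind Grothendieck's theory of the `Q`-sheaf, EGA III 7.7.8.)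
Let `φ : M → N` be a map of finite free modules over a commutative ring `R` and let
`Q = coker(φ^∨ : N^∨ → M^∨)`.  Then for every `R`-algebra `A` there is a bijection, functorial
in `A` and equivariant under scalar multiplication by `Aˣ`, between `Hom_A(Q ⊗_R A, A)` and
`ker(φ ⊗_R A : M ⊗_R A → N ⊗_R A)`.  The bijection is given by evaluation: the homomorphism
`ψ` corresponding to `m ∈ ker(φ ⊗ A)` satisfies `ψ(ξ ⊗ 1) = ⟨ξ, m⟩` for every `ξ ∈ M^∨`. -/
theorem q_module_represents_kernel
    {R M N : Type} [CommRing R]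
    [AddCommGroup M] [Module R M] [Module.Free R M] [Module.Finite R M]
    [AddCommGroup N] [Module R N] [Module.Free R N] [Module.Finite R N]
    (φ : M →ₗ[R] N) :
    ∃ e : ∀ (A : Type) [CommRing A] [Algebra R A],
        ((A ⊗[R] (Module.Dual R M ⧸ LinearMap.range φ.dualMap)) →ₗ[A] A) ≃
          LinearMap.ker (LinearMap.baseChange A φ),
      -- the bijection is induced by the evaluation pairing
      (∀ (A : Type) [CommRing A] [Algebra R A]
        (ψ : (A ⊗[R] (Module.Dual R M ⧸ LinearMap.range φ.dualMap)) →ₗ[A] A)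
        (ξ : Module.Dual R M),
          ψ ((1 : A) ⊗ₜ[R] Submodule.Quotient.mk ξ) = evalPairing R A M ξ (e A ψ : A ⊗[R] M)) ∧
      -- equivariance under scalar multiplication by units of `A`
      (∀ (A : Type) [CommRing A] [Algebra R A] (u : Aˣ)
        (ψ : (A ⊗[R] (Module.Dual R M ⧸ LinearMap.range φ.dualMap)) →ₗ[A] A),
          (e A ((u : A) • ψ) : A ⊗[R] M) = (u : A) • (e A ψ : A ⊗[R] M)) ∧
      -- naturality in the `R`-algebra `A`
      (∀ (A B : Type) [CommRing A] [Algebra R A] [CommRing B] [Algebra R B] (g : A →ₐ[R] B)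
        (ψA : (A ⊗[R] (Module.Dual R M ⧸ LinearMap.range φ.dualMap)) →ₗ[A] A)
        (ψB : (B ⊗[R] (Module.Dual R M ⧸ LinearMap.range φ.dualMap)) →ₗ[B] B),
        (∀ q : Module.Dual R M ⧸ LinearMap.range φ.dualMap,
            ψB ((1 : B) ⊗ₜ[R] q) = g (ψA ((1 : A) ⊗ₜ[R] q))) →
          LinearMap.rTensor M g.toLinearMap (e A ψA : A ⊗[R] M) = (e B ψB : B ⊗[R] M)) := by
  refine ⟨fun A _ _ => eAux φ A, ?_, ?_, ?_⟩
  · intro A _ _ ψ ξ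
    exact (evalPairing_fwdElem φ A ψ ξ).symm
  · intro A _ _ u ψ
    show fwdElem φ A ((u : A) • ψ) = (u : A) • fwdElem φ A ψ
    rw [fwdElem, fwdElem, Finset.smul_sum]
    refine Finset.sum_congr rfl fun i _ => ?_
    rw [smul_tmul']
    simp only [fwdAux_apply, LinearMap.smul_apply, smul_eq_mul]
  · intro A B _ _ _ _ g ψA ψB h
    show LinearMap.rTensor M g.toLinearMap (fwdElem φ A ψA) = fwdElem φ B ψB
    rw [fwdElem, fwdElem, map_sum]
    refine Finset.sum_congr rfl fun i _ => ?_
    simp only [LinearMap.rTensor_tmul, fwdAux_apply, h, AlgHom.toLinearMap_apply]
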